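/- For every positive integer n ≡ 1 (mod 3) and every cell c of the n×n×n cube, the cube with c removed can be tiled by three-dimensional trominoes. -/

import Mathlib

/-- Standard basis vectors of `ℤ³`. -/
def e3 : Fin 3 → ℤ × ℤ × ℤ
  | 0 => (1, 0, 0)
  | 1 => (0, 1, 0)
  | 2 => (0, 0, 1)

/-- A 3D L-tromino: a cell together with two cells adjacent to it along two
different coordinate axes (equivalently, a translate/axis-rotation of
`{(0,0,0),(1,0,0),(0,1,0)}`). -/
def IsTromino3 (s : Finset (ℤ × ℤ × ℤ)) : Prop :=
  ∃ (c : ℤ × ℤ × ℤ) (i j : Fin 3) (ε₁ ε₂ : ℤ), i ≠ j ∧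
    (ε₁ = 1 ∨ ε₁ = -1) ∧ (ε₂ = 1 ∨ ε₂ = -1) ∧
    s = {c, c + ε₁ • e3 i, c + ε₂ • e3 j}

/-- The axis-aligned box `[0,a) × [0,b) × [0,c)` in `ℤ³`. -/
noncomputable def box (a b c : ℕ) : Finset (ℤ × ℤ × ℤ) :=
  (Finset.Ico (0 : ℤ) a) ×ˢ (Finset.Ico (0 : ℤ) b) ×ˢ (Finset.Ico (0 : ℤ) c)

/-- `T` is a tiling of the region `R` by 3D trominoes: the trominoes are
pairwise disjoint and their union is exactly `R`. -/
def IsTiling3 (R : Finset (ℤ × ℤ × ℤ)) (T : Finset (Finset (ℤ × ℤ × ℤ))) : Prop :=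
  (∀ t ∈ T, IsTromino3 t) ∧
    (∀ t₁ ∈ T, ∀ t₂ ∈ T, t₁ ≠ t₂ → Disjoint t₁ t₂) ∧
    (∀ x, x ∈ R ↔ ∃ t ∈ T, x ∈ t)

/-! ### Decidable criterion -/

def IsTiling3D (R : Finset (ℤ × ℤ × ℤ)) (T : Finset (Finset (ℤ × ℤ × ℤ))) : Prop :=
  (∀ t ∈ T, ∃ c ∈ t, ∃ i : Fin 3, ∃ j : Fin 3, ∃ ε₁ ∈ ({1,-1} : Finset ℤ),
      ∃ ε₂ ∈ ({1,-1} : Finset ℤ), i ≠ j ∧ t = {c, c + ε₁ • e3 i, c + ε₂ • e3 j}) ∧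
    (∀ t₁ ∈ T, ∀ t₂ ∈ T, t₁ ≠ t₂ → Disjoint t₁ t₂) ∧
    R = T.biUnion id

instance {R T} : Decidable (IsTiling3D R T) := by unfold IsTiling3D; infer_instance

theorem isTiling3_of_dec {R T} (h : IsTiling3D R T) : IsTiling3 R T := by
  obtain ⟨h1, h2, h3⟩ := h
  refine ⟨?_, h2, ?_⟩
  · intro t ht
    obtain ⟨c, _, i, j, ε₁, hε₁, ε₂, hε₂, hij, hs⟩ := h1 t ht
    simp only [Finset.mem_insert, Finset.mem_singleton] at hε₁ hε₂
    exact ⟨c, i, j, ε₁, ε₂, hij, hε₁, hε₂, hs⟩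
  · intro x
    subst h3
    simp [Finset.mem_biUnion]

/-! ### Tileable -/

def Tileable (R : Finset (ℤ × ℤ × ℤ)) : Prop := ∃ T, IsTiling3 R T

theorem tileable_empty : Tileable ∅ :=
  ⟨∅, by simp [IsTiling3], by simp, by simp⟩

theorem tileable_congr {R S} (h : R = S) (hR : Tileable R) : Tileable S := h ▸ hR

theorem tileable_union {R S} (hRS : Disjoint R S) (hR : Tileable R) (hS : Tileable S) :
    Tileable (R ∪ S) := by
  obtain ⟨T1, hT1a, hT1b, hT1c⟩ := hR
  obtain ⟨T2, hT2a, hT2b, hT2c⟩ := hS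
  have hsub1 : ∀ t ∈ T1, t ⊆ R := fun t ht x hx => (hT1c x).2 ⟨t, ht, hx⟩
  have hsub2 : ∀ t ∈ T2, t ⊆ S := fun t ht x hx => (hT2c x).2 ⟨t, ht, hx⟩
  refine ⟨T1 ∪ T2, ?_, ?_, ?_⟩
  · intro t ht
    rcases Finset.mem_union.1 ht with h | h
    exacts [hT1a t h, hT2a t h]
  · intro t₁ h₁ t₂ h₂ hne
    rcases Finset.mem_union.1 h₁ with h₁ | h₁ <;> rcases Finset.mem_union.1 h₂ with h₂ | h₂
    · exact hT1b t₁ h₁ t₂ h₂ hne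
    · exact hRS.mono (hsub1 t₁ h₁) (hsub2 t₂ h₂)
    · exact hRS.symm.mono (hsub2 t₁ h₁) (hsub1 t₂ h₂)
    · exact hT2b t₁ h₁ t₂ h₂ hne
  · intro x
    rw [Finset.mem_union, hT1c x, hT2c x]
    constructor
    · rintro (⟨t, ht, hx⟩ | ⟨t, ht, hx⟩)
      exacts [⟨t, Finset.mem_union_left _ ht, hx⟩, ⟨t, Finset.mem_union_right _ ht, hx⟩]
    · rintro ⟨t, ht, hx⟩
      rcases Finset.mem_union.1 ht with h | h
      exacts [Or.inl ⟨t, h, hx⟩, Or.inr ⟨t, h, hx⟩]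

/-! ### Symmetries -/

def GoodMap (f : ℤ × ℤ × ℤ → ℤ × ℤ × ℤ) : Prop :=
  Function.Injective f ∧ ∃ σ : Fin 3 → Fin 3, Function.Injective σ ∧
    ∀ i : Fin 3, ∃ δ : ℤ, (δ = 1 ∨ δ = -1) ∧
      ∀ x t, f (x + t • e3 i) = f x + (t * δ) • e3 (σ i)

theorem tromino_image {f} (hf : GoodMap f) {s} (hs : IsTromino3 s) : IsTromino3 (s.image f) := by
  obtain ⟨hinj, σ, hσ, hδ⟩ := hf
  obtain ⟨c, i, j, ε₁, ε₂, hij, h1, h2, rfl⟩ := hs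
  obtain ⟨δi, hδi, hfi⟩ := hδ i
  obtain ⟨δj, hδj, hfj⟩ := hδ j
  refine ⟨f c, σ i, σ j, ε₁ * δi, ε₂ * δj, fun h => hij (hσ h), ?_, ?_, ?_⟩
  · rcases h1 with rfl | rfl <;> rcases hδi with rfl | rfl <;> norm_num
  · rcases h2 with rfl | rfl <;> rcases hδj with rfl | rfl <;> norm_num
  · simp only [Finset.image_insert, Finset.image_singleton, hfi, hfj]

theorem tileable_map {f} (hf : GoodMap f) {R} (h : Tileable R) : Tileable (R.image f) := by
  obtain ⟨T, hTa, hTb, hTc⟩ := h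
  refine ⟨T.image (Finset.image f), ?_, ?_, ?_⟩
  · intro t ht
    obtain ⟨s, hs, rfl⟩ := Finset.mem_image.1 ht
    exact tromino_image hf (hTa s hs)
  · intro t₁ h₁ t₂ h₂ hne
    obtain ⟨s₁, hs₁, rfl⟩ := Finset.mem_image.1 h₁
    obtain ⟨s₂, hs₂, rfl⟩ := Finset.mem_image.1 h₂
    exact (Finset.disjoint_image hf.1).2 (hTb s₁ hs₁ s₂ hs₂ (fun h => hne (by rw [h])))
  · intro x
    constructor
    · intro hx
      obtain ⟨y, hy, rfl⟩ := Finset.mem_image.1 hx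
      obtain ⟨t, ht, hyt⟩ := (hTc y).1 hy
      exact ⟨t.image f, Finset.mem_image_of_mem _ ht, Finset.mem_image_of_mem f hyt⟩
    · rintro ⟨t, ht, hxt⟩
      obtain ⟨s, hs, rfl⟩ := Finset.mem_image.1 ht
      obtain ⟨y, hy, rfl⟩ := Finset.mem_image.1 hxt
      exact Finset.mem_image_of_mem f ((hTc y).2 ⟨s, hs, hy⟩)

theorem goodMap_translate (v : ℤ × ℤ × ℤ) : GoodMap (· + v) := by
  refine ⟨add_left_injective v, id, Function.injective_id, fun i => ⟨1, Or.inl rfl, fun x t => ?_⟩⟩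
  simp only [id_eq, mul_one]
  rw [add_right_comm]

def reflX (a : ℤ) : ℤ × ℤ × ℤ → ℤ × ℤ × ℤ := fun p => (a - p.1, p.2.1, p.2.2)
def reflY (a : ℤ) : ℤ × ℤ × ℤ → ℤ × ℤ × ℤ := fun p => (p.1, a - p.2.1, p.2.2)
def reflZ (a : ℤ) : ℤ × ℤ × ℤ → ℤ × ℤ × ℤ := fun p => (p.1, p.2.1, a - p.2.2)

theorem goodMap_reflX (a : ℤ) : GoodMap (reflX a) := by
  refine ⟨?_, id, Function.injective_id, fun i => ?_⟩
  · rintro ⟨p1, p2, p3⟩ ⟨q1, q2, q3⟩ hpq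
    simp only [reflX, Prod.mk.injEq] at hpq ⊢
    omega
  · fin_cases i
    · exact ⟨-1, Or.inr rfl, fun x t => by
        obtain ⟨x1, x2, x3⟩ := x
        simp [reflX, e3, Prod.ext_iff]; ring⟩
    · exact ⟨1, Or.inl rfl, fun x t => by
        obtain ⟨x1, x2, x3⟩ := x
        simp [reflX, e3, Prod.ext_iff]⟩
    · exact ⟨1, Or.inl rfl, fun x t => by
        obtain ⟨x1, x2, x3⟩ := x
        simp [reflX, e3, Prod.ext_iff]⟩

theorem goodMap_reflY (a : ℤ) : GoodMap (reflY a) := by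
  refine ⟨?_, id, Function.injective_id, fun i => ?_⟩
  · rintro ⟨p1, p2, p3⟩ ⟨q1, q2, q3⟩ hpq
    simp only [reflY, Prod.mk.injEq] at hpq ⊢
    omega
  · fin_cases i
    · exact ⟨1, Or.inl rfl, fun x t => by
        obtain ⟨x1, x2, x3⟩ := x
        simp [reflY, e3, Prod.ext_iff]⟩
    · exact ⟨-1, Or.inr rfl, fun x t => by
        obtain ⟨x1, x2, x3⟩ := x
        simp [reflY, e3, Prod.ext_iff]; ring⟩
    · exact ⟨1, Or.inl rfl, fun x t => by
        obtain ⟨x1, x2, x3⟩ := x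
        simp [reflY, e3, Prod.ext_iff]⟩

theorem goodMap_reflZ (a : ℤ) : GoodMap (reflZ a) := by
  refine ⟨?_, id, Function.injective_id, fun i => ?_⟩
  · rintro ⟨p1, p2, p3⟩ ⟨q1, q2, q3⟩ hpq
    simp only [reflZ, Prod.mk.injEq] at hpq ⊢
    omega
  · fin_cases i
    · exact ⟨1, Or.inl rfl, fun x t => by
        obtain ⟨x1, x2, x3⟩ := x
        simp [reflZ, e3, Prod.ext_iff]⟩
    · exact ⟨1, Or.inl rfl, fun x t => by
        obtain ⟨x1, x2, x3⟩ := x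
        simp [reflZ, e3, Prod.ext_iff]⟩
    · exact ⟨-1, Or.inr rfl, fun x t => by
        obtain ⟨x1, x2, x3⟩ := x
        simp [reflZ, e3, Prod.ext_iff]; ring⟩

/-! ### Membership lemmas -/

theorem mem_box {a b c : ℕ} {x : ℤ × ℤ × ℤ} :
    x ∈ box a b c ↔ 0 ≤ x.1 ∧ x.1 < a ∧ 0 ≤ x.2.1 ∧ x.2.1 < b ∧ 0 ≤ x.2.2 ∧ x.2.2 < c := by
  obtain ⟨x1, x2, x3⟩ := x
  simp [box, Finset.mem_Ico, and_assoc]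

theorem mem_image_translate {v x : ℤ × ℤ × ℤ} {R : Finset (ℤ × ℤ × ℤ)} :
    x ∈ R.image (· + v) ↔ x - v ∈ R := by
  rw [Finset.mem_image]
  constructor
  · rintro ⟨y, hy, rfl⟩; simpa using hy
  · intro h; exact ⟨x - v, h, by ring⟩

/-! ### Stacking boxes -/

theorem tileable_stackX {a a' b c : ℕ} (h1 : Tileable (box a b c)) (h2 : Tileable (box a' b c)) :
    Tileable (box (a + a') b c) := by
  have key : box (a + a') b c = box a b c ∪ (box a' b c).image (· + ((a : ℤ), 0, 0)) := by
    ext ⟨x, y, z⟩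
    simp only [Finset.mem_union, mem_box, mem_image_translate, Prod.mk_sub_mk]
    push_cast
    omega
  rw [key]
  refine tileable_union ?_ h1 (tileable_map (goodMap_translate _) h2)
  rw [Finset.disjoint_left]
  rintro ⟨x, y, z⟩ hx hx'
  simp only [mem_box, mem_image_translate, Prod.mk_sub_mk] at hx hx'
  omega

theorem tileable_stackY {a b b' c : ℕ} (h1 : Tileable (box a b c)) (h2 : Tileable (box a b' c)) :
    Tileable (box a (b + b') c) := by
  have key : box a (b + b') c = box a b c ∪ (box a b' c).image (· + (0, (b : ℤ), 0)) := by
    ext ⟨x, y, z⟩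
    simp only [Finset.mem_union, mem_box, mem_image_translate, Prod.mk_sub_mk]
    push_cast
    omega
  rw [key]
  refine tileable_union ?_ h1 (tileable_map (goodMap_translate _) h2)
  rw [Finset.disjoint_left]
  rintro ⟨x, y, z⟩ hx hx'
  simp only [mem_box, mem_image_translate, Prod.mk_sub_mk] at hx hx'
  omega

theorem tileable_stackZ {a b c c' : ℕ} (h1 : Tileable (box a b c)) (h2 : Tileable (box a b c')) :
    Tileable (box a b (c + c')) := by
  have key : box a b (c + c') = box a b c ∪ (box a b c').image (· + (0, 0, (c : ℤ))) := by
    ext ⟨x, y, z⟩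
    simp only [Finset.mem_union, mem_box, mem_image_translate, Prod.mk_sub_mk]
    push_cast
    omega
  rw [key]
  refine tileable_union ?_ h1 (tileable_map (goodMap_translate _) h2)
  rw [Finset.disjoint_left]
  rintro ⟨x, y, z⟩ hx hx'
  simp only [mem_box, mem_image_translate, Prod.mk_sub_mk] at hx hx'
  omega

theorem box_zero₁ {b c : ℕ} : box 0 b c = ∅ := by
  ext ⟨x, y, z⟩; simp [mem_box]; omega

theorem box_zero₂ {a c : ℕ} : box a 0 c = ∅ := by
  ext ⟨x, y, z⟩; simp [mem_box]; omega

theorem box_zero₃ {a b : ℕ} : box a b 0 = ∅ := by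
  ext ⟨x, y, z⟩; simp [mem_box]

theorem tileable_mulX {a b c : ℕ} (h : Tileable (box a b c)) (p : ℕ) :
    Tileable (box (p * a) b c) := by
  induction p with
  | zero => simpa [box_zero₁] using tileable_empty
  | succ p ih =>
      have e : (p + 1) * a = p * a + a := by ring
      rw [e]
      exact tileable_stackX ih h

theorem tileable_mulY {a b c : ℕ} (h : Tileable (box a b c)) (p : ℕ) :
    Tileable (box a (p * b) c) := by
  induction p with
  | zero => simpa [box_zero₂] using tileable_empty
  | succ p ih =>
      have e : (p + 1) * b = p * b + b := by ring
      rw [e]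
      exact tileable_stackY ih h

theorem tileable_mulZ {a b c : ℕ} (h : Tileable (box a b c)) (p : ℕ) :
    Tileable (box a b (p * c)) := by
  induction p with
  | zero => simpa [box_zero₃] using tileable_empty
  | succ p ih =>
      have e : (p + 1) * c = p * c + c := by ring
      rw [e]
      exact tileable_stackZ ih h

/-! ### Explicit tilings -/

def tiling4_000 : Finset (Finset (ℤ × ℤ × ℤ)) := {{(0, 0, 1), (0, 1, 1), (1, 0, 1)}, {(0, 0, 2), (0, 1, 2), (1, 0, 2)}, {(0, 0, 3), (0, 1, 3), (1, 0, 3)}, {(0, 1, 0), (0, 2, 0), (1, 1, 0)}, {(0, 2, 1), (0, 3, 1), (1, 2, 1)}, {(0, 2, 2), (0, 3, 2), (1, 2, 2)}, {(0, 2, 3), (0, 3, 3), (1, 2, 3)}, {(0, 3, 0), (1, 2, 0), (1, 3, 0)}, {(1, 0, 0), (2, 0, 0), (2, 1, 0)}, {(1, 1, 1), (1, 1, 2), (2, 1, 1)}, {(1, 1, 3), (2, 1, 3), (2, 2, 3)}, {(1, 3, 1), (1, 3, 2), (2, 3, 1)}, {(1, 3, 3), (2, 3, 2), (2, 3, 3)},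 {(2, 0, 1), (2, 0, 2), (3, 0, 1)}, {(2, 0, 3), (3, 0, 3), (3, 1, 3)}, {(2, 1, 2), (3, 0, 2), (3, 1, 2)}, {(2, 2, 0), (2, 3, 0), (3, 2, 0)}, {(2, 2, 1), (2, 2, 2), (3, 2, 2)}, {(3, 0, 0), (3, 1, 0), (3, 1, 1)}, {(3, 2, 1), (3, 3, 0), (3, 3, 1)}, {(3, 2, 3), (3, 3, 2), (3, 3, 3)}}

def tiling4_001 : Finset (Finset (ℤ × ℤ × ℤ)) := {{(0, 0, 0), (0, 1, 0), (1, 0, 0)}, {(0, 0, 2), (0, 1, 2), (1, 0, 2)}, {(0, 0, 3), (0, 1, 3), (1, 0, 3)}, {(0, 1, 1), (0, 2, 1), (1, 1, 1)}, {(0, 2, 0), (0, 3, 0), (1, 2, 0)}, {(0, 2, 2), (0, 3, 2), (1, 2, 2)}, {(0, 2, 3), (0, 3, 3), (1, 2, 3)}, {(0, 3, 1), (1, 2, 1), (1, 3, 1)}, {(1, 0, 1), (2, 0, 1), (2, 1, 1)}, {(1, 1, 0), (2, 1, 0), (2, 2, 0)}, {(1, 1, 2), (1, 1, 3), (2, 1,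 2)}, {(1, 3, 0), (2, 3, 0), (2, 3, 1)}, {(1, 3, 2), (1, 3, 3), (2, 3, 2)}, {(2, 0, 0), (3, 0, 0), (3, 1, 0)}, {(2, 0, 2), (2, 0, 3), (3, 0, 2)}, {(2, 1, 3), (3, 0, 3), (3, 1, 3)}, {(2, 2, 1), (2, 2, 2), (3, 2, 1)}, {(2, 2, 3), (2, 3, 3), (3, 2, 3)}, {(3, 0, 1), (3, 1, 1), (3, 1, 2)}, {(3, 2, 0), (3, 3, 0), (3, 3, 1)}, {(3, 2, 2), (3, 3, 2), (3, 3, 3)}}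

def tiling4_010 : Finset (Finset (ℤ × ℤ × ℤ)) := {{(0, 0, 0), (0, 0, 1), (1, 0, 0)}, {(0, 0, 2), (0, 1, 2), (1, 0, 2)}, {(0, 0, 3), (0, 1, 3), (1, 0, 3)}, {(0, 1, 1), (0, 2, 1), (1, 1, 1)}, {(0, 2, 0), (0, 3, 0), (1, 2, 0)}, {(0, 2, 2), (0, 3, 2), (1, 2, 2)}, {(0, 2, 3), (0, 3, 3), (1, 2, 3)}, {(0, 3, 1), (1, 2, 1), (1, 3, 1)}, {(1, 0, 1), (2, 0, 1), (2, 1, 1)}, {(1, 1, 0), (2, 1, 0), (2, 2, 0)}, {(1, 1, 2), (1, 1, 3), (2, 1, 2)}, {(1, 3, 0), (2, 3, 0), (2, 3, 1)}, {(1, 3, 2), (1, 3, 3), (2, 3, 2)}, {(2, 0, 0), (3, 0, 0), (3, 1, 0)}, {(2, 0, 2), (2, 0, 3), (3, 0, 2)}, {(2, 1, 3), (3, 0, 3), (3, 1, 3)}, {(2, 2, 1), (2, 2, 2), (3, 2, 1)}, {(2, 2, 3), (2, 3, 3), (3, 2, 3)}, {(3, 0, 1), (3, 1, 1), (3, 1,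 2)}, {(3, 2, 0), (3, 3, 0), (3, 3, 1)}, {(3, 2, 2), (3, 3, 2), (3, 3, 3)}}

def tiling4_011 : Finset (Finset (ℤ × ℤ × ℤ)) := {{(0, 0, 0), (0, 1, 0), (1, 0, 0)}, {(0, 0, 1), (0, 0, 2), (1, 0, 1)}, {(0, 0, 3), (0, 1, 3), (1, 0, 3)}, {(0, 1, 2), (0, 2, 2), (1, 1, 2)}, {(0, 2, 0), (0, 3, 0), (1, 2, 0)}, {(0, 2, 1), (0, 3, 1), (1, 2, 1)}, {(0, 2, 3), (0, 3, 3), (1, 2, 3)}, {(0, 3, 2), (1, 2, 2), (1, 3, 2)}, {(1, 0, 2), (2, 0, 2), (2, 1, 2)}, {(1, 1, 0), (1, 1, 1), (2, 1, 0)}, {(1, 1, 3), (2, 1, 3), (2, 2, 3)}, {(1, 3, 0), (1, 3, 1), (2, 3, 0)}, {(1, 3, 3), (2, 3, 2), (2, 3, 3)}, {(2, 0, 0), (2, 0, 1), (3, 0, 0)}, {(2, 0, 3), (3, 0, 3), (3, 1, 3)}, {(2, 1, 1), (2, 2, 1), (3, 1, 1)}, {(2, 2, 0), (3, 1, 0),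 (3, 2, 0)}, {(2, 2, 2), (3, 2, 1), (3, 2, 2)}, {(2, 3, 1), (3, 3, 0), (3, 3, 1)}, {(3, 0, 1), (3, 0, 2), (3, 1, 2)}, {(3, 2, 3), (3, 3, 2), (3, 3, 3)}}

def tiling4_100 : Finset (Finset (ℤ × ℤ × ℤ)) := {{(0, 0, 0), (0, 0, 1), (0, 1, 0)}, {(0, 0, 2), (0, 1, 2), (1, 0, 2)}, {(0, 0, 3), (0, 1, 3), (1, 0, 3)}, {(0, 1, 1), (0, 2, 1), (1, 1, 1)}, {(0, 2, 0), (0, 3, 0), (1, 2, 0)}, {(0, 2, 2), (0, 3, 2), (1, 2, 2)}, {(0, 2, 3), (0, 3, 3), (1, 2, 3)}, {(0, 3, 1), (1, 2, 1), (1, 3, 1)}, {(1, 0, 1), (2, 0, 1), (2, 1, 1)}, {(1, 1, 0), (2, 1, 0), (2, 2, 0)}, {(1, 1, 2), (1, 1, 3), (2, 1, 2)}, {(1, 3, 0), (2, 3, 0), (2, 3, 1)}, {(1, 3, 2), (1, 3, 3), (2, 3, 2)}, {(2, 0, 0), (3, 0, 0), (3, 1, 0)}, {(2, 0, 2), (2,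 0, 3), (3, 0, 2)}, {(2, 1, 3), (3, 0, 3), (3, 1, 3)}, {(2, 2, 1), (2, 2, 2), (3, 2, 1)}, {(2, 2, 3), (2, 3, 3), (3, 2, 3)}, {(3, 0, 1), (3, 1, 1), (3, 1, 2)}, {(3, 2, 0), (3, 3, 0), (3, 3, 1)}, {(3, 2, 2), (3, 3, 2), (3, 3, 3)}}

def tiling4_101 : Finset (Finset (ℤ × ℤ × ℤ)) := {{(0, 0, 0), (0, 1, 0), (1, 0, 0)}, {(0, 0, 1), (0, 0, 2), (0, 1, 1)}, {(0, 0, 3), (0, 1, 3), (1, 0, 3)}, {(0, 1, 2), (0, 2, 2), (1, 1, 2)}, {(0, 2, 0), (0, 3, 0), (1, 2, 0)}, {(0, 2, 1), (0, 3, 1), (1, 2, 1)}, {(0, 2, 3), (0, 3, 3), (1, 2, 3)}, {(0, 3, 2), (1, 2, 2), (1, 3, 2)}, {(1, 0, 2), (2, 0, 2), (2, 1, 2)}, {(1, 1, 0), (1, 1, 1), (2, 1, 0)}, {(1, 1, 3), (2, 1, 3), (2, 2, 3)}, {(1, 3, 0), (1, 3, 1), (2, 3, 0)}, {(1, 3,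 3), (2, 3, 2), (2, 3, 3)}, {(2, 0, 0), (2, 0, 1), (3, 0, 0)}, {(2, 0, 3), (3, 0, 3), (3, 1, 3)}, {(2, 1, 1), (2, 2, 1), (3, 1, 1)}, {(2, 2, 0), (3, 1, 0), (3, 2, 0)}, {(2, 2, 2), (3, 2, 1), (3, 2, 2)}, {(2, 3, 1), (3, 3, 0), (3, 3, 1)}, {(3, 0, 1), (3, 0, 2), (3, 1, 2)}, {(3, 2, 3), (3, 3, 2), (3, 3, 3)}}

def tiling4_110 : Finset (Finset (ℤ × ℤ × ℤ)) := {{(0, 0, 0), (0, 1, 0), (1, 0, 0)}, {(0, 0, 1), (0, 1, 1), (1, 0, 1)}, {(0, 0, 2), (0, 1, 2), (1, 0, 2)}, {(0, 0, 3), (0, 1, 3), (1, 0, 3)}, {(0, 2, 0), (0, 3, 0), (1, 2, 0)}, {(0, 2, 1), (0, 3, 1), (1, 2, 1)}, {(0, 2, 2), (0, 3, 2), (1, 2, 2)}, {(0, 2, 3), (0, 3, 3), (1, 2, 3)}, {(1, 1, 1), (1, 1, 2), (2, 1, 1)}, {(1, 1, 3), (2, 1, 3), (2, 2, 3)}, {(1,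 3, 0), (1, 3, 1), (2, 3, 0)}, {(1, 3, 2), (1, 3, 3), (2, 3, 2)}, {(2, 0, 0), (2, 1, 0), (3, 0, 0)}, {(2, 0, 1), (2, 0, 2), (3, 0, 1)}, {(2, 0, 3), (3, 0, 3), (3, 1, 3)}, {(2, 1, 2), (2, 2, 1), (2, 2, 2)}, {(2, 2, 0), (3, 1, 0), (3, 2, 0)}, {(2, 3, 1), (3, 3, 0), (3, 3, 1)}, {(2, 3, 3), (3, 2, 3), (3, 3, 3)}, {(3, 0, 2), (3, 1, 1), (3, 1, 2)}, {(3, 2, 1), (3, 2, 2), (3, 3, 2)}}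

def tiling4_111 : Finset (Finset (ℤ × ℤ × ℤ)) := {{(0, 0, 0), (0, 1, 0), (1, 0, 0)}, {(0, 0, 1), (0, 1, 1), (1, 0, 1)}, {(0, 0, 2), (0, 1, 2), (1, 0, 2)}, {(0, 0, 3), (0, 1, 3), (1, 0, 3)}, {(0, 2, 0), (0, 3, 0), (1, 2, 0)}, {(0, 2, 1), (0, 3, 1), (1, 2, 1)}, {(0, 2, 2), (0, 3, 2), (1, 2, 2)}, {(0, 2, 3), (0, 3, 3), (1, 2, 3)}, {(1, 1, 0), (2, 1, 0), (2, 2, 0)}, {(1, 1, 2), (1, 1, 3), (2, 1, 2)}, {(1, 3, 0), (1, 3, 1), (2, 3, 0)}, {(1, 3, 2), (1, 3, 3), (2, 3, 2)}, {(2, 0, 0), (2, 0, 1), (3, 0, 0)}, {(2, 0, 2), (2, 0, 3), (3, 0, 2)}, {(2, 1, 1), (2, 2, 1), (2, 2, 2)}, {(2, 1, 3), (3, 0, 3), (3, 1, 3)}, {(2, 2, 3), (2, 3, 3), (3, 2, 3)}, {(2, 3, 1), (3, 3, 0), (3, 3, 1)}, {(3, 0, 1), (3, 1, 1), (3, 1,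 2)}, {(3, 1, 0), (3, 2, 0), (3, 2, 1)}, {(3, 2, 2), (3, 3, 2), (3, 3, 3)}}

def tilingBox_333 : Finset (Finset (ℤ × ℤ × ℤ)) := {{(0, 0, 0), (0, 1, 0), (1, 0, 0)}, {(0, 0, 1), (0, 0, 2), (1, 0, 1)}, {(0, 1, 1), (0, 2, 1), (1, 1, 1)}, {(0, 1, 2), (0, 2, 2), (1, 1, 2)}, {(0, 2, 0), (1, 1, 0), (1, 2, 0)}, {(1, 0, 2), (2, 0, 2), (2, 1, 2)}, {(1, 2, 1), (1, 2, 2), (2, 2, 2)}, {(2, 0, 0), (2, 0, 1), (2, 1, 0)}, {(2, 1, 1), (2, 2, 0), (2, 2, 1)}}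

def tilingBox_321 : Finset (Finset (ℤ × ℤ × ℤ)) := {{(0, 0, 0), (0, 1, 0), (1, 0, 0)}, {(1, 1, 0), (2, 0, 0), (2, 1, 0)}}

def tilingBox_231 : Finset (Finset (ℤ × ℤ × ℤ)) := {{(0, 0, 0), (0, 1, 0), (1, 0, 0)}, {(0, 2, 0), (1, 1, 0), (1, 2, 0)}}

def tilingBox_213 : Finset (Finset (ℤ × ℤ × ℤ)) := {{(0, 0, 0), (0, 0, 1), (1, 0, 0)}, {(0, 0, 2), (1, 0, 1), (1, 0, 2)}}

def tilingBox_312 : Finset (Finset (ℤ × ℤ × ℤ)) := {{(0, 0, 0), (0, 0, 1), (1, 0, 0)}, {(1, 0, 1), (2, 0, 0), (2, 0, 1)}}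


set_option maxRecDepth 100000
set_option maxHeartbeats 2000000

theorem tileable_box321 : Tileable (box 3 2 1) := ⟨tilingBox_321, isTiling3_of_dec (by decide)⟩
theorem tileable_box231 : Tileable (box 2 3 1) := ⟨tilingBox_231, isTiling3_of_dec (by decide)⟩
theorem tileable_box213 : Tileable (box 2 1 3) := ⟨tilingBox_213, isTiling3_of_dec (by decide)⟩
theorem tileable_box312 : Tileable (box 3 1 2) := ⟨tilingBox_312, isTiling3_of_dec (by decide)⟩
theorem tileable_box333 : Tileable (box 3 3 3) := ⟨tilingBox_333, isTiling3_of_dec (by decide)⟩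

/-! ### Pattern lemmas -/

theorem box_eq {a a' b b' c c' : ℕ} (ha : a = a') (hb : b = b') (hc : c = c') :
    box a b c = box a' b' c' := by subst ha hb hc; rfl

theorem tileable_A (p q r : ℕ) : Tileable (box (3 * p) (2 * q) r) := by
  have h1 := tileable_mulZ tileable_box321 r
  rw [mul_one] at h1
  have h2 := tileable_mulY h1 q
  have h3 := tileable_mulX h2 p
  exact tileable_congr (box_eq (by omega) (by omega) rfl) h3

theorem tileable_B (p q r : ℕ) : Tileable (box (2 * p) (3 * q) r) := by
  have h1 := tileable_mulZ tileable_box231 r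
  rw [mul_one] at h1
  have h2 := tileable_mulY h1 q
  have h3 := tileable_mulX h2 p
  exact tileable_congr (box_eq (by omega) (by omega) rfl) h3

theorem tileable_C (p q r : ℕ) : Tileable (box (2 * p) q (3 * r)) := by
  have h1 := tileable_mulY tileable_box213 q
  rw [mul_one] at h1
  have h2 := tileable_mulZ h1 r
  have h3 := tileable_mulX h2 p
  exact tileable_congr (box_eq (by omega) rfl (by omega)) h3

theorem tileable_D (p q r : ℕ) : Tileable (box (3 * p) q (2 * r)) := by
  have h1 := tileable_mulY tileable_box312 q
  rw [mul_one] at h1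
  have h2 := tileable_mulZ h1 r
  have h3 := tileable_mulX h2 p
  exact tileable_congr (box_eq (by omega) rfl (by omega)) h3

theorem tileable_E (p q r : ℕ) : Tileable (box (3 * p) (3 * q) (3 * r)) := by
  have h1 := tileable_mulZ tileable_box333 r
  have h2 := tileable_mulY h1 q
  have h3 := tileable_mulX h2 p
  exact tileable_congr (box_eq (by omega) (by omega) (by omega)) h3

/-! ### Slabs for the induction step -/

theorem slab1 (k : ℕ) : Tileable (box 3 (3 * k + 7) (3 * k + 7)) := by
  have h1 : Tileable (box 3 4 (3 * k + 7)) :=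
    tileable_congr (box_eq (by omega) (by omega) rfl) (tileable_A 1 2 (3 * k + 7))
  have h2 : Tileable (box 3 (3 * k + 3) 4) :=
    tileable_congr (box_eq (by omega) rfl (by omega)) (tileable_D 1 (3 * k + 3) 2)
  have h3 : Tileable (box 3 (3 * k + 3) (3 * k + 3)) :=
    tileable_congr (box_eq (by omega) (by omega) (by omega)) (tileable_E 1 (k + 1) (k + 1))
  have h4 : Tileable (box 3 (3 * k + 3) (3 * k + 7)) :=
    tileable_congr (box_eq rfl rfl (by omega)) (tileable_stackZ h2 h3)
  exact tileable_congr (box_eq rfl (by omega) rfl) (tileable_stackY h1 h4)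

theorem slab2 (k : ℕ) : Tileable (box (3 * k + 4) 3 (3 * k + 7)) := by
  have h1 : Tileable (box 4 3 (3 * k + 7)) :=
    tileable_congr (box_eq (by omega) (by omega) rfl) (tileable_B 2 1 (3 * k + 7))
  have h2 : Tileable (box (3 * k) 3 4) :=
    tileable_congr (box_eq rfl rfl (by omega)) (tileable_D k 3 2)
  have h3 : Tileable (box (3 * k) 3 (3 * k + 3)) :=
    tileable_congr (box_eq rfl (by omega) (by omega)) (tileable_E k 1 (k + 1))
  have h4 : Tileable (box (3 * k) 3 (3 * k + 7)) :=
    tileable_congr (box_eq rfl rfl (by omega)) (tileable_stackZ h2 h3)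
  exact tileable_congr (box_eq (by omega) rfl rfl) (tileable_stackX h1 h4)

theorem slab3 (k : ℕ) : Tileable (box (3 * k + 4) (3 * k + 4) 3) := by
  have h1 : Tileable (box 4 (3 * k + 4) 3) :=
    tileable_congr (box_eq (by omega) rfl (by omega)) (tileable_C 2 (3 * k + 4) 1)
  have h2 : Tileable (box (3 * k) 4 3) :=
    tileable_congr (box_eq rfl (by omega) rfl) (tileable_A k 2 3)
  have h3 : Tileable (box (3 * k) (3 * k) 3) :=
    tileable_congr (box_eq rfl (by omega) (by omega)) (tileable_E k k 1)
  have h4 : Tileable (box (3 * k) (3 * k + 4) 3) :=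
    tileable_congr (box_eq rfl (by omega) rfl) (tileable_stackY h2 h3)
  exact tileable_congr (box_eq (by omega) rfl rfl) (tileable_stackX h1 h4)

/-! ### Reflection reduction -/

theorem tileable_erase_reflect {N : ℕ} {f} (hf : GoodMap f)
    (hbox : (box N N N).image f = box N N N) (h : ℤ × ℤ × ℤ)
    (ht : Tileable ((box N N N).erase h)) : Tileable ((box N N N).erase (f h)) := by
  have h2 := tileable_map hf ht
  rwa [Finset.image_erase hf.1, hbox] at h2

theorem image_reflX_box {N : ℕ} : (box N N N).image (reflX ((N : ℤ) - 1)) = box N N N := by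
  ext ⟨x, y, z⟩
  rw [Finset.mem_image]
  constructor
  · rintro ⟨⟨q1, q2, q3⟩, hq, hqe⟩
    rw [mem_box] at hq
    simp only [reflX, Prod.mk.injEq] at hqe
    rw [mem_box]
    simp only at hq ⊢
    omega
  · intro hp
    refine ⟨((N : ℤ) - 1 - x, y, z), ?_, by simp [reflX]⟩
    rw [mem_box] at hp ⊢
    simp only at hp ⊢
    omega

theorem image_reflY_box {N : ℕ} : (box N N N).image (reflY ((N : ℤ) - 1)) = box N N N := by
  ext ⟨x, y, z⟩
  rw [Finset.mem_image]
  constructor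
  · rintro ⟨⟨q1, q2, q3⟩, hq, hqe⟩
    rw [mem_box] at hq
    simp only [reflY, Prod.mk.injEq] at hqe
    rw [mem_box]
    simp only at hq ⊢
    omega
  · intro hp
    refine ⟨(x, (N : ℤ) - 1 - y, z), ?_, by simp [reflY]⟩
    rw [mem_box] at hp ⊢
    simp only at hp ⊢
    omega

theorem image_reflZ_box {N : ℕ} : (box N N N).image (reflZ ((N : ℤ) - 1)) = box N N N := by
  ext ⟨x, y, z⟩
  rw [Finset.mem_image]
  constructor
  · rintro ⟨⟨q1, q2, q3⟩, hq, hqe⟩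
    rw [mem_box] at hq
    simp only [reflZ, Prod.mk.injEq] at hqe
    rw [mem_box]
    simp only at hq ⊢
    omega
  · intro hp
    refine ⟨(x, y, (N : ℤ) - 1 - z), ?_, by simp [reflZ]⟩
    rw [mem_box] at hp ⊢
    simp only at hp ⊢
    omega

theorem reduce (N m : ℕ) (hNm : N ≤ 2 * m)
    (core : ∀ h ∈ box N N N, h.1 < (m : ℤ) → h.2.1 < (m : ℤ) → h.2.2 < (m : ℤ) →
      Tileable ((box N N N).erase h)) :
    ∀ h ∈ box N N N, Tileable ((box N N N).erase h) := by
  have core2 : ∀ h ∈ box N N N, h.2.1 < (m : ℤ) → h.2.2 < (m : ℤ) →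
      Tileable ((box N N N).erase h) := by
    rintro ⟨h1, h2, h3⟩ hmem hy hz
    by_cases hx : h1 < (m : ℤ)
    · exact core _ hmem hx hy hz
    · rw [mem_box] at hmem
      simp only at hmem hy hz
      have hmem' : ((N : ℤ) - 1 - h1, h2, h3) ∈ box N N N := by
        rw [mem_box]; simp only; omega
      have ht := core _ hmem' (by simp only; omega) hy hz
      have := tileable_erase_reflect (goodMap_reflX ((N : ℤ) - 1)) image_reflX_box _ ht
      have he : reflX ((N : ℤ) - 1) ((N : ℤ) - 1 - h1, h2, h3) = (h1, h2, h3) := by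
        simp [reflX]
      rwa [he] at this
  have core1 : ∀ h ∈ box N N N, h.2.2 < (m : ℤ) → Tileable ((box N N N).erase h) := by
    rintro ⟨h1, h2, h3⟩ hmem hz
    by_cases hy : h2 < (m : ℤ)
    · exact core2 _ hmem hy hz
    · rw [mem_box] at hmem
      simp only at hmem hz
      have hmem' : (h1, (N : ℤ) - 1 - h2, h3) ∈ box N N N := by
        rw [mem_box]; simp only; omega
      have ht := core2 _ hmem' (by simp only; omega) hz
      have := tileable_erase_reflect (goodMap_reflY ((N : ℤ) - 1)) image_reflY_box _ ht
      have he : reflY ((N : ℤ) - 1) (h1, (N : ℤ) - 1 - h2, h3) = (h1, h2, h3) := by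
        simp [reflY]
      rwa [he] at this
  rintro ⟨h1, h2, h3⟩ hmem
  by_cases hz : h3 < (m : ℤ)
  · exact core1 _ hmem hz
  · rw [mem_box] at hmem
    simp only at hmem
    have hmem' : (h1, h2, (N : ℤ) - 1 - h3) ∈ box N N N := by
      rw [mem_box]; simp only; omega
    have ht := core1 _ hmem' (by simp only; omega)
    have := tileable_erase_reflect (goodMap_reflZ ((N : ℤ) - 1)) image_reflZ_box _ ht
    have he : reflZ ((N : ℤ) - 1) (h1, h2, (N : ℤ) - 1 - h3) = (h1, h2, h3) := by
      simp [reflZ]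
    rwa [he] at this

/-! ### The induction step -/

theorem core_step (n : ℕ) (S1 : Tileable (box 3 (n + 3) (n + 3)))
    (S2 : Tileable (box n 3 (n + 3))) (S3 : Tileable (box n n 3))
    (IH : ∀ h ∈ box n n n, Tileable ((box n n n).erase h)) :
    ∀ h ∈ box (n + 3) (n + 3) (n + 3), h.1 < (n : ℤ) → h.2.1 < (n : ℤ) → h.2.2 < (n : ℤ) →
      Tileable ((box (n + 3) (n + 3) (n + 3)).erase h) := by
  rintro ⟨h1, h2, h3⟩ hmem hx hy hz
  rw [mem_box] at hmem
  simp only at hmem hx hy hz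
  have hhmem : ((h1, h2, h3) : ℤ × ℤ × ℤ) ∈ box n n n := by
    rw [mem_box]; simp only; omega
  have key : (box (n + 3) (n + 3) (n + 3)).erase (h1, h2, h3) =
      ((box n n n).erase (h1, h2, h3)) ∪
        (((box 3 (n + 3) (n + 3)).image (· + ((n : ℤ), 0, 0))) ∪
          (((box n 3 (n + 3)).image (· + (0, (n : ℤ), 0))) ∪
            ((box n n 3).image (· + (0, 0, (n : ℤ)))))) := by
    ext ⟨x, y, z⟩
    simp only [Finset.mem_erase, Finset.mem_union, mem_box, mem_image_translate,
      Prod.mk_sub_mk, Prod.mk.injEq, ne_eq, not_and]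
    push_cast
    omega
  rw [key]
  refine tileable_union ?_ (IH _ hhmem) (tileable_union ?_
    (tileable_map (goodMap_translate _) S1) (tileable_union ?_
      (tileable_map (goodMap_translate _) S2) (tileable_map (goodMap_translate _) S3)))
  · rw [Finset.disjoint_left]
    rintro ⟨x, y, z⟩ hp hq
    simp only [Finset.mem_erase, Finset.mem_union, mem_box, mem_image_translate,
      Prod.mk_sub_mk] at hp hq
    push_cast at hp hq
    omega
  · rw [Finset.disjoint_left]
    rintro ⟨x, y, z⟩ hp hq
    simp only [Finset.mem_union, mem_box, mem_image_translate, Prod.mk_sub_mk] at hp hq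
    push_cast at hp hq
    omega
  · rw [Finset.disjoint_left]
    rintro ⟨x, y, z⟩ hp hq
    simp only [Finset.mem_union, mem_box, mem_image_translate, Prod.mk_sub_mk] at hp hq
    push_cast at hp hq
    omega

/-! ### Base case n = 4 -/

theorem core4 : ∀ h ∈ box 4 4 4, h.1 < (2 : ℤ) → h.2.1 < (2 : ℤ) → h.2.2 < (2 : ℤ) →
    Tileable ((box 4 4 4).erase h) := by
  rintro ⟨h1, h2, h3⟩ hmem hx hy hz
  rw [mem_box] at hmem
  simp only at hmem hx hy hz
  have hc : (h1 = 0 ∨ h1 = 1) ∧ (h2 = 0 ∨ h2 = 1) ∧ (h3 = 0 ∨ h3 = 1) := by omega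
  obtain ⟨rfl | rfl, rfl | rfl, rfl | rfl⟩ := hc
  exacts [⟨tiling4_000, isTiling3_of_dec (by decide)⟩,
    ⟨tiling4_001, isTiling3_of_dec (by decide)⟩,
    ⟨tiling4_010, isTiling3_of_dec (by decide)⟩,
    ⟨tiling4_011, isTiling3_of_dec (by decide)⟩,
    ⟨tiling4_100, isTiling3_of_dec (by decide)⟩,
    ⟨tiling4_101, isTiling3_of_dec (by decide)⟩,
    ⟨tiling4_110, isTiling3_of_dec (by decide)⟩,
    ⟨tiling4_111, isTiling3_of_dec (by decide)⟩]

theorem base4 : ∀ h ∈ box 4 4 4, Tileable ((box 4 4 4).erase h) :=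
  reduce 4 2 (by omega) core4

/-! ### Main induction -/

theorem aux (k : ℕ) : ∀ h ∈ box (3 * k + 4) (3 * k + 4) (3 * k + 4),
    Tileable ((box (3 * k + 4) (3 * k + 4) (3 * k + 4)).erase h) := by
  induction k with
  | zero => simpa using base4
  | succ k ih =>
      have e : 3 * (k + 1) + 4 = (3 * k + 4) + 3 := by omega
      rw [e]
      refine reduce ((3 * k + 4) + 3) (3 * k + 4) (by omega) ?_
      refine core_step (3 * k + 4) ?_ ?_ ?_ ih
      · exact tileable_congr (box_eq rfl (by omega) (by omega)) (slab1 k)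
      · exact tileable_congr (box_eq rfl rfl (by omega)) (slab2 k)
      · exact slab3 k

/-- For every positive `n ≡ 1 (mod 3)`, every singly deficient `n×n×n` cube can
be tiled by 3D trominoes. -/
theorem tile_singly_deficient_cube (n : ℕ) (hn : 0 < n) (h : n % 3 = 1)
    (c : ℤ × ℤ × ℤ) (hc : c ∈ box n n n) :
    ∃ T : Finset (Finset (ℤ × ℤ × ℤ)), IsTiling3 ((box n n n).erase c) T := by
  by_cases h1 : n = 1
  · subst h1
    obtain ⟨c1, c2, c3⟩ := c
    rw [mem_box] at hc
    simp only at hc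
    have : c1 = 0 ∧ c2 = 0 ∧ c3 = 0 := by push_cast at hc; omega
    obtain ⟨rfl, rfl, rfl⟩ := this
    have he : (box 1 1 1).erase ((0 : ℤ), (0 : ℤ), (0 : ℤ)) = ∅ := by decide
    rw [he]
    exact tileable_empty
  · obtain ⟨k, rfl⟩ : ∃ k, n = 3 * k + 4 := ⟨n / 3 - 1, by omega⟩
    exact aux k c hc
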